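/- Let g > 0 and let F: ℝ → ℝ be a smooth solution of the modified Painlevé II equation F''(z) = zF(z) + 2εF(z)³ with ε = ±1. Then the function ψ(x,t) = exp(i g(x - 2gt²/3) t) · g^{1/3} · F(g^{1/3}(x - gt²)) satisfies the cubic nonlinear Schrödinger equation i ψ_t + ψ_{xx} = 2ε|ψ|²ψ. -/

import Mathlib

open Complex

theorem stmt_3 (g ε : ℝ) (hg : 0 < g) (hε : ε = 1 ∨ ε = -1)
    (F : ℝ → ℝ) (hF : ContDiff ℝ 2 F)
    (hPII : ∀ z, deriv (deriv F) z = z * F z + 2 * ε * (F z) ^ 3)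
    (ψ : ℝ → ℝ → ℂ)
    (hψ : ∀ x t, ψ x t =
      Complex.exp (Complex.I * (g * (x - 2 * g * t ^ 2 / 3) * t : ℝ)) *
        ((g ^ ((1 : ℝ) / 3) : ℝ) : ℂ) *
        ((F ((g ^ ((1 : ℝ) / 3) : ℝ) * (x - g * t ^ 2)) : ℝ) : ℂ)) :
    ∀ x t,
      Complex.I * deriv (fun s => ψ x s) t +
        deriv (fun y => deriv (fun y' => ψ y' t) y) x =
      2 * ε * ‖ψ x t‖ ^ 2 * ψ x t := by
  intro x t
  set a : ℝ := g ^ ((1 : ℝ) / 3) with ha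
  have hapos : 0 < a := Real.rpow_pos_of_pos hg _
  have ha3 : a ^ 3 = g := by
    rw [ha, ← Real.rpow_natCast (g ^ ((1:ℝ)/3)) 3, ← Real.rpow_mul hg.le]
    norm_num
  have hdF : ∀ w, HasDerivAt F (deriv F w) w := fun w =>
    ((hF.differentiable (by norm_num)) w).hasDerivAt
  have hdF' : ∀ w, HasDerivAt (deriv F) (deriv (deriv F) w) w := by
    intro w
    have h2 : ContDiff ℝ 1 (deriv F) := by
      have := (contDiff_succ_iff_deriv (n := 1)).mp (by exact_mod_cast hF)
      exact this.2.2
    exact ((h2.differentiable (by norm_num)) w).hasDerivAt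
  -- t-derivative of ψ x ·
  have hψfun : (fun s => ψ x s) = fun s =>
      Complex.exp (Complex.I * ((g * (x - 2 * g * s ^ 2 / 3) * s : ℝ) : ℂ)) *
        ((a : ℝ) : ℂ) * ((F (a * (x - g * s ^ 2)) : ℝ) : ℂ) := by
    funext s; exact hψ x s
  have hθt : HasDerivAt (fun s : ℝ => g * (x - 2 * g * s ^ 2 / 3) * s)
      (g * x - 2 * g ^ 2 * t ^ 2) t := by
    have h1 : HasDerivAt (fun s : ℝ => g * (x - 2 * g * s ^ 2 / 3))
        (g * (-(2 * g * (2 * t) / 3))) t := by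
      have := (((hasDerivAt_pow 2 t).const_mul (2 * g)).div_const 3)
      have h0 : HasDerivAt (fun s : ℝ => x - 2 * g * s ^ 2 / 3)
          (0 - 2 * g * (2 * t ^ 1) / 3) t :=
        (hasDerivAt_const t x).sub this
      simpa using h0.const_mul g
    have := h1.mul (hasDerivAt_id t)
    refine this.congr_deriv ?_
    simp only [id_eq, pow_one]
    ring
  have hzt : HasDerivAt (fun s : ℝ => a * (x - g * s ^ 2)) (a * (-(2 * g * t))) t := by
    have h0 : HasDerivAt (fun s : ℝ => x - g * s ^ 2) (0 - g * (2 * t ^ 1)) t :=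
      (hasDerivAt_const t x).sub ((hasDerivAt_pow 2 t).const_mul g)
    have := h0.const_mul a
    refine this.congr_deriv ?_
    ring
  set z : ℝ := a * (x - g * t ^ 2) with hz
  set E : ℂ := Complex.exp (Complex.I * ((g * (x - 2 * g * t ^ 2 / 3) * t : ℝ) : ℂ)) with hE
  have hEt : HasDerivAt (fun s : ℝ =>
      Complex.exp (Complex.I * ((g * (x - 2 * g * s ^ 2 / 3) * s : ℝ) : ℂ)))
      (E * (Complex.I * ((g * x - 2 * g ^ 2 * t ^ 2 : ℝ) : ℂ))) t := by
    have h1 : HasDerivAt (fun s : ℝ => ((g * (x - 2 * g * s ^ 2 / 3) * s : ℝ) : ℂ))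
        (((g * x - 2 * g ^ 2 * t ^ 2 : ℝ) : ℂ)) t := hθt.ofReal_comp
    have h2 := (h1.const_mul Complex.I).cexp
    simpa [hE, mul_comm] using h2
  have hFt : HasDerivAt (fun s : ℝ => ((F (a * (x - g * s ^ 2)) : ℝ) : ℂ))
      (((deriv F z * (a * (-(2 * g * t))) : ℝ) : ℂ)) t :=
    (((hdF z).comp t hzt)).ofReal_comp
  have hψt : HasDerivAt (fun s => ψ x s)
      (E * (Complex.I * ((g * x - 2 * g ^ 2 * t ^ 2 : ℝ) : ℂ)) * ((a : ℝ) : ℂ) *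
          ((F z : ℝ) : ℂ) +
        E * ((a : ℝ) : ℂ) * ((deriv F z * (a * (-(2 * g * t))) : ℝ) : ℂ)) t := by
    rw [hψfun]
    have := (hEt.mul_const (((a : ℝ) : ℂ))).mul hFt
    refine this.congr_deriv ?_
    all_goals (rw [hz])
  -- x-derivative: first derivative as a function
  have hψy : ∀ y : ℝ, HasDerivAt (fun y' => ψ y' t)
      (Complex.exp (Complex.I * ((g * (y - 2 * g * t ^ 2 / 3) * t : ℝ) : ℂ)) *
        (Complex.I * ((g * t : ℝ) : ℂ) * ((a : ℝ) : ℂ) * ((F (a * (y - g * t ^ 2)) : ℝ) : ℂ) +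
         ((a : ℝ) : ℂ) ^ 2 * ((deriv F (a * (y - g * t ^ 2)) : ℝ) : ℂ))) y := by
    intro y
    have hfun : (fun y' => ψ y' t) = fun y' =>
        Complex.exp (Complex.I * ((g * (y' - 2 * g * t ^ 2 / 3) * t : ℝ) : ℂ)) *
          ((a : ℝ) : ℂ) * ((F (a * (y' - g * t ^ 2)) : ℝ) : ℂ) := by
      funext y'; exact hψ y' t
    rw [hfun]
    have hθx : HasDerivAt (fun y' : ℝ => g * (y' - 2 * g * t ^ 2 / 3) * t) (g * t) y := by
      have h0 : HasDerivAt (fun y' : ℝ => y' - 2 * g * t ^ 2 / 3) 1 y :=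
        (hasDerivAt_id y).sub_const _
      have := (h0.const_mul g).mul_const t
      refine this.congr_deriv ?_; ring
    have hEx : HasDerivAt (fun y' : ℝ =>
        Complex.exp (Complex.I * ((g * (y' - 2 * g * t ^ 2 / 3) * t : ℝ) : ℂ)))
        (Complex.exp (Complex.I * ((g * (y - 2 * g * t ^ 2 / 3) * t : ℝ) : ℂ)) *
          (Complex.I * ((g * t : ℝ) : ℂ))) y := by
      have h2 := ((hθx.ofReal_comp).const_mul Complex.I).cexp
      simpa [mul_comm] using h2
    have hzx : HasDerivAt (fun y' : ℝ => a * (y' - g * t ^ 2)) a y := by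
      have := ((hasDerivAt_id y).sub_const (g * t ^ 2)).const_mul a
      simpa using this
    have hFx : HasDerivAt (fun y' : ℝ => ((F (a * (y' - g * t ^ 2)) : ℝ) : ℂ))
        (((deriv F (a * (y - g * t ^ 2)) * a : ℝ) : ℂ)) y :=
      (((hdF _).comp y hzx)).ofReal_comp
    have := (hEx.mul_const (((a : ℝ) : ℂ))).mul hFx
    refine this.congr_deriv ?_
    push_cast
    ring
  have hd1 : (fun y => deriv (fun y' => ψ y' t) y) = fun y =>
      Complex.exp (Complex.I * ((g * (y - 2 * g * t ^ 2 / 3) * t : ℝ) : ℂ)) *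
        (Complex.I * ((g * t : ℝ) : ℂ) * ((a : ℝ) : ℂ) * ((F (a * (y - g * t ^ 2)) : ℝ) : ℂ) +
         ((a : ℝ) : ℂ) ^ 2 * ((deriv F (a * (y - g * t ^ 2)) : ℝ) : ℂ)) := by
    funext y; exact (hψy y).deriv
  -- second x-derivative
  have hGx : HasDerivAt (fun y : ℝ =>
      Complex.I * ((g * t : ℝ) : ℂ) * ((a : ℝ) : ℂ) * ((F (a * (y - g * t ^ 2)) : ℝ) : ℂ) +
        ((a : ℝ) : ℂ) ^ 2 * ((deriv F (a * (y - g * t ^ 2)) : ℝ) : ℂ))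
      (Complex.I * ((g * t : ℝ) : ℂ) * ((a : ℝ) : ℂ) * ((deriv F z * a : ℝ) : ℂ) +
        ((a : ℝ) : ℂ) ^ 2 * ((deriv (deriv F) z * a : ℝ) : ℂ)) x := by
    have hzx : HasDerivAt (fun y : ℝ => a * (y - g * t ^ 2)) a x := by
      have := ((hasDerivAt_id x).sub_const (g * t ^ 2)).const_mul a
      simpa using this
    have hFx : HasDerivAt (fun y : ℝ => ((F (a * (y - g * t ^ 2)) : ℝ) : ℂ))
        (((deriv F z * a : ℝ) : ℂ)) x := (((hdF z).comp x hzx)).ofReal_comp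
    have hF'x : HasDerivAt (fun y : ℝ => ((deriv F (a * (y - g * t ^ 2)) : ℝ) : ℂ))
        (((deriv (deriv F) z * a : ℝ) : ℂ)) x := by
        have := (((hdF' z).comp x hzx)).ofReal_comp; exact this
    exact (hFx.const_mul _).add (hF'x.const_mul _)
  have hEx : HasDerivAt (fun y : ℝ =>
      Complex.exp (Complex.I * ((g * (y - 2 * g * t ^ 2 / 3) * t : ℝ) : ℂ)))
      (E * (Complex.I * ((g * t : ℝ) : ℂ))) x := by
    have hθx : HasDerivAt (fun y : ℝ => g * (y - 2 * g * t ^ 2 / 3) * t) (g * t) x := by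
      have h0 : HasDerivAt (fun y : ℝ => y - 2 * g * t ^ 2 / 3) 1 x :=
        (hasDerivAt_id x).sub_const _
      have := (h0.const_mul g).mul_const t
      refine this.congr_deriv ?_; ring
    have h2 := ((hθx.ofReal_comp).const_mul Complex.I).cexp
    simpa [hE, mul_comm] using h2
  have hψxx : HasDerivAt (fun y => deriv (fun y' => ψ y' t) y)
      (E * (Complex.I * ((g * t : ℝ) : ℂ)) *
          (Complex.I * ((g * t : ℝ) : ℂ) * ((a : ℝ) : ℂ) * ((F z : ℝ) : ℂ) +
            ((a : ℝ) : ℂ) ^ 2 * ((deriv F z : ℝ) : ℂ)) +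
        E * (Complex.I * ((g * t : ℝ) : ℂ) * ((a : ℝ) : ℂ) * ((deriv F z * a : ℝ) : ℂ) +
          ((a : ℝ) : ℂ) ^ 2 * ((deriv (deriv F) z * a : ℝ) : ℂ))) x := by
    rw [hd1]
    have := hEx.mul hGx
    refine this.congr_deriv ?_; rw [hz]
  rw [hψt.deriv, hψxx.deriv]
  -- |ψ|^2
  have habs2 : ‖ψ x t‖ ^ 2 = a ^ 2 * (F z) ^ 2 := by
    rw [hψ x t, norm_mul, norm_mul, mul_comm Complex.I, Complex.norm_exp_ofReal_mul_I,
      one_mul, Complex.norm_real, Complex.norm_real, Real.norm_eq_abs, Real.norm_eq_abs,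
      mul_pow, _root_.sq_abs, _root_.sq_abs]
  rw [show ((‖ψ x t‖ : ℝ) : ℂ) ^ 2 = ((a ^ 2 * (F z) ^ 2 : ℝ) : ℂ) by
    rw [← Complex.ofReal_pow, habs2], hψ x t]
  have hPz : deriv (deriv F) z = z * F z + 2 * ε * (F z) ^ 3 := hPII z
  rw [hPz, hz]
  rw [hE]
  rw [← ha3]
  push_cast
  ring_nf
  rw [Complex.I_sq]
  ring
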